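/- arXiv:1403.0346 — 3 statements merged into one kernel-verified Lean document; each statement's English description precedes it below -/
import Mathlib

section
/- Let n ≥ 2 and let 𝔞, 𝔟, 𝔠 be elements of GL(n, ℂ) such that [𝔞, 𝔟] = 𝔠, [𝔞, 𝔠] = [𝔟, 𝔠] = id, and 𝔠^p = id for some prime p with 𝔠 ≠ id. Then p ≤ n. -/
open Polynomial Module

private lemma birkhoff_peel {M : Type*} [AddCommGroup M] [Module ℂ M]
    (f : Module.End ℂ M) (l : List ℂ) (u : M) (hu : u ≠ 0)
    (h : (l.map (fun z => f - z • 1)).prod u = 0) :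
    ∃ z ∈ l, ∃ v, v ≠ 0 ∧ f v = z • v := by
  induction l with
  | nil =>
    simp only [List.map_nil, List.prod_nil, Module.End.one_apply] at h
    exact absurd h hu
  | cons z l ih =>
    rw [List.map_cons, List.prod_cons] at h
    by_cases h' : (l.map (fun z => f - z • 1)).prod u = 0
    · obtain ⟨z', hz', hv⟩ := ih h'
      exact ⟨z', List.mem_cons_of_mem _ hz', hv⟩
    · refine ⟨z, List.mem_cons_self, (l.map (fun z => f - z • 1)).prod u, h', ?_⟩
      have h0 : (f - z • 1) ((l.map (fun z => f - z • 1)).prod u) = 0 := h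
      rw [LinearMap.sub_apply, LinearMap.smul_apply, Module.End.one_apply, sub_eq_zero] at h0
      exact h0

/-- Birkhoff's lemma: if `a, b, c ∈ GL(n, ℂ)` satisfy `[a,b] = c`,
`c` commutes with `a` and `b`, and `c^p = 1` for a prime `p` with `c ≠ 1`,
then `p ≤ n`. -/
theorem birkhoff_lemma (n : ℕ) (hn : 2 ≤ n) (a b c : GL (Fin n) ℂ)
    (h1 : a * b * a⁻¹ * b⁻¹ = c)
    (h2 : a * c * a⁻¹ * c⁻¹ = 1)
    (h3 : b * c * b⁻¹ * c⁻¹ = 1)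
    (p : ℕ) (hp : p.Prime) (hcp : c ^ p = 1) (hc : c ≠ 1) :
    p ≤ n := by
  classical
  -- group-level equations
  have h1' : a * b = c * b * a := by
    rw [mul_inv_eq_iff_eq_mul, mul_inv_eq_iff_eq_mul] at h1; exact h1
  have h2' : a * c = c * a := by
    rw [mul_inv_eq_iff_eq_mul, mul_inv_eq_iff_eq_mul, one_mul] at h2; exact h2
  have h3' : b * c = c * b := by
    rw [mul_inv_eq_iff_eq_mul, mul_inv_eq_iff_eq_mul, one_mul] at h3; exact h3
  have h2inv : a⁻¹ * c = c * a⁻¹ := (Commute.inv_left h2').eq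
  have h3inv : b⁻¹ * c = c * b⁻¹ := (Commute.inv_left h3').eq
  -- pass to linear endomorphisms
  set T := Matrix.toLinAlgEquiv' (R := ℂ) (n := Fin n) with hT
  set fa := T (a : Matrix (Fin n) (Fin n) ℂ) with hfa
  set fb := T (b : Matrix (Fin n) (Fin n) ℂ) with hfb
  set fc := T (c : Matrix (Fin n) (Fin n) ℂ) with hfc
  set fa' := T ((a⁻¹ : GL (Fin n) ℂ) : Matrix (Fin n) (Fin n) ℂ) with hfa'
  set fb' := T ((b⁻¹ : GL (Fin n) ℂ) : Matrix (Fin n) (Fin n) ℂ) with hfb'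
  have hab : fa * fb = fc * fb * fa := by
    rw [hfa, hfb, hfc, ← map_mul, ← map_mul, ← map_mul, ← Units.val_mul, ← Units.val_mul,
      ← Units.val_mul, h1']
  have hac : fa * fc = fc * fa := by
    rw [hfa, hfc, ← map_mul, ← map_mul, ← Units.val_mul, ← Units.val_mul, h2']
  have hbc : fb * fc = fc * fb := by
    rw [hfb, hfc, ← map_mul, ← map_mul, ← Units.val_mul, ← Units.val_mul, h3']
  have hacinv : fa' * fc = fc * fa' := by
    rw [hfa', hfc, ← map_mul, ← map_mul, ← Units.val_mul, ← Units.val_mul, h2inv]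
  have hbcinv : fb' * fc = fc * fb' := by
    rw [hfb', hfc, ← map_mul, ← map_mul, ← Units.val_mul, ← Units.val_mul, h3inv]
  have haa' : fa * fa' = 1 := by
    rw [hfa, hfa', ← map_mul, ← Units.val_mul, mul_inv_cancel, Units.val_one, map_one]
  have hbb' : fb * fb' = 1 := by
    rw [hfb, hfb', ← map_mul, ← Units.val_mul, mul_inv_cancel, Units.val_one, map_one]
  have hfcp : fc ^ p = 1 := by
    rw [hfc, ← map_pow, ← Units.val_pow_eq_pow_val, hcp, Units.val_one, map_one]
  have hfc1 : fc ≠ 1 := by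
    intro h
    apply hc
    apply Units.ext
    have : T (c : Matrix (Fin n) (Fin n) ℂ) = T 1 := by rw [map_one]; exact h
    simpa using T.injective this
  -- find an eigenvalue z ≠ 1 of fc with z ^ p = 1
  set P : ℂ[X] := ∑ i ∈ Finset.range p, X ^ i with hP
  have hPeval1 : P.eval 1 = (p : ℂ) := by
    simp [hP, eval_finset_sum]
  have hp0 : (p : ℂ) ≠ 0 := Nat.cast_ne_zero.mpr hp.ne_zero
  have hPne : P ≠ 0 := fun h => hp0 (by rw [← hPeval1, h, eval_zero])
  have hPmul : aeval fc P * (fc - 1) = 0 := by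
    have h := congrArg (aeval fc) (geom_sum_mul (X : ℂ[X]) p)
    simp only [map_mul, map_sub, map_pow, aeval_X, map_one] at h
    rw [← hP] at h
    rw [h, hfcp, sub_self]
  obtain ⟨w, hw⟩ : ∃ w : Fin n → ℂ, fc w ≠ w := by
    by_contra h
    push_neg at h
    exact hfc1 (LinearMap.ext fun x => h x)
  set u := (fc - 1) w with hu
  have hune : u ≠ 0 := by
    rw [hu]
    simpa [LinearMap.sub_apply, sub_eq_zero] using hw
  have hPu : aeval fc P u = 0 := by
    have h := congrArg (fun g : Module.End ℂ (Fin n → ℂ) => g w) hPmul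
    simp only [Module.End.mul_apply, LinearMap.zero_apply] at h
    rw [hu]
    exact h
  -- factor P into linear factors
  have hsplit : Splits P := IsAlgClosed.splits P
  have hfact : P = C P.leadingCoeff * (P.roots.map fun z => X - C z).prod :=
    hsplit.eq_prod_roots
  set l := P.roots.toList with hl
  have hroots : P.roots = (l : Multiset ℂ) := (Multiset.coe_toList _).symm
  have haevalP : aeval fc P = P.leadingCoeff • (l.map fun z => fc - z • 1).prod := by
    conv_lhs => rw [hfact]
    rw [map_mul, hroots, Multiset.map_coe, Multiset.prod_coe, map_list_prod (aeval fc) _]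
    have h3 : (List.map (⇑(aeval fc)) (l.map fun z => X - C z))
        = l.map fun z => fc - z • 1 := by
      rw [List.map_map]
      refine List.map_congr_left fun z _ => ?_
      simp only [Function.comp_apply, map_sub, aeval_X, aeval_C,
        Algebra.algebraMap_eq_smul_one]
    rw [h3, aeval_C, Algebra.algebraMap_eq_smul_one, smul_mul_assoc, one_mul]
  have hlc : P.leadingCoeff ≠ 0 := leadingCoeff_ne_zero.mpr hPne
  have hprodu : (l.map fun z => fc - z • 1).prod u = 0 := by
    have h := hPu
    rw [haevalP, LinearMap.smul_apply] at h
    exact (smul_eq_zero.mp h).resolve_left hlc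
  obtain ⟨z, hzl, v, hv0, hv⟩ := birkhoff_peel fc l u hune hprodu
  have hzroot : P.eval z = 0 := by
    have hm : z ∈ P.roots := by rw [hroots]; exact Multiset.mem_coe.mpr hzl
    exact (mem_roots hPne).mp hm
  have hz1 : z ≠ 1 := fun h => hp0 (by rw [← hPeval1, ← h, hzroot])
  have hzp : z ^ p = 1 := by
    have hg := geom_sum_mul z p
    have hev : (∑ i ∈ Finset.range p, z ^ i) = 0 := by
      rw [← hzroot]; simp [hP, eval_finset_sum]
    rw [hev, zero_mul] at hg
    exact sub_eq_zero.mp hg.symm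
  -- the eigenspace
  set V := Module.End.eigenspace fc z with hV
  have hvV : v ∈ V := Module.End.mem_eigenspace_iff.mpr hv
  have hmaps : ∀ (g : Module.End ℂ (Fin n → ℂ)), g * fc = fc * g → ∀ x ∈ V, g x ∈ V := by
    intro g hg x hx
    rw [hV, Module.End.mem_eigenspace_iff] at hx ⊢
    have h := congrArg (fun t : Module.End ℂ (Fin n → ℂ) => t x) hg
    simp only [Module.End.mul_apply] at h
    rw [← h, hx, map_smul]
  have hVa := hmaps fa hac
  have hVb := hmaps fb hbc
  have hVa' := hmaps fa' hacinv
  have hVb' := hmaps fb' hbcinv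
  set ra := fa.restrict hVa with hra
  set rb := fb.restrict hVb with hrb
  set ra' := fa'.restrict hVa' with hra'
  set rb' := fb'.restrict hVb' with hrb'
  have hkey : ra * rb = z • (rb * ra) := by
    apply LinearMap.ext
    intro x
    apply Subtype.ext
    have lhs : ((ra * rb) x : Fin n → ℂ) = fa (fb x) := rfl
    have rhs : (((z • (rb * ra)) x) : Fin n → ℂ) = z • fb (fa x) := rfl
    rw [lhs, rhs]
    have e1 : fa (fb (x : Fin n → ℂ)) = fc (fb (fa x)) := by
      have h := congrArg (fun t : Module.End ℂ (Fin n → ℂ) => t (x : Fin n → ℂ)) hab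
      simpa [Module.End.mul_apply] using h
    have e2 : fb (fa (x : Fin n → ℂ)) ∈ V := hVb _ (hVa _ x.2)
    rw [e1, Module.End.mem_eigenspace_iff.mp e2]
  have hra1 : ra * ra' = 1 := by
    apply LinearMap.ext; intro x; apply Subtype.ext
    have h0 : ((ra * ra') x : Fin n → ℂ) = fa (fa' x) := rfl
    rw [h0]
    have h := congrArg (fun t : Module.End ℂ (Fin n → ℂ) => t (x : Fin n → ℂ)) haa'
    simpa [Module.End.mul_apply] using h
  have hrb1 : rb * rb' = 1 := by
    apply LinearMap.ext; intro x; apply Subtype.ext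
    have h0 : ((rb * rb') x : Fin n → ℂ) = fb (fb' x) := rfl
    rw [h0]
    have h := congrArg (fun t : Module.End ℂ (Fin n → ℂ) => t (x : Fin n → ℂ)) hbb'
    simpa [Module.End.mul_apply] using h
  -- determinants
  have hdetra : LinearMap.det ra ≠ 0 := by
    intro h
    have h' := congrArg LinearMap.det hra1
    rw [map_mul, h, zero_mul, map_one] at h'
    exact zero_ne_one h'
  have hdetrb : LinearMap.det rb ≠ 0 := by
    intro h
    have h' := congrArg LinearMap.det hrb1
    rw [map_mul, h, zero_mul, map_one] at h'
    exact zero_ne_one h'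
  set d := Module.finrank ℂ V with hd
  have hdet : LinearMap.det ra * LinearMap.det rb
      = z ^ d * (LinearMap.det rb * LinearMap.det ra) := by
    have h := congrArg LinearMap.det hkey
    rw [map_mul] at h
    rw [h, LinearMap.det_smul, map_mul]
  have hzd : z ^ d = 1 := by
    have hne : LinearMap.det ra * LinearMap.det rb ≠ 0 := mul_ne_zero hdetra hdetrb
    have h : z ^ d * (LinearMap.det rb * LinearMap.det ra)
        = 1 * (LinearMap.det rb * LinearMap.det ra) := by
      rw [one_mul, ← hdet]; ring
    exact mul_right_cancel₀ (mul_ne_zero hdetrb hdetra) h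
  -- conclude
  have hdpos : 0 < d := by
    apply Nat.pos_of_ne_zero
    intro h
    rw [hd, Submodule.finrank_eq_zero] at h
    rw [h, Submodule.mem_bot] at hvV
    exact hv0 hvV
  have horder : orderOf z = p := by
    have hdvd : orderOf z ∣ p := orderOf_dvd_of_pow_eq_one hzp
    rcases (Nat.Prime.eq_one_or_self_of_dvd hp _ hdvd) with h | h
    · exact absurd (orderOf_eq_one_iff.mp h) hz1
    · exact h
  have hpd : p ∣ d := by
    rw [← horder]
    exact orderOf_dvd_of_pow_eq_one hzd
  have hdn : d ≤ n := by
    have h := Submodule.finrank_le V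
    rwa [Module.finrank_pi, Fintype.card_fin] at h
  exact (Nat.le_of_dvd hdpos hpd).trans hdn
end

section
/- In the group of Möbius transformations PGL(2,ℂ) acting on ℙ¹, the transformation t ↦ 1/t and a generic transformation t ↦ (αt+β)/(γt+δ) generate a group isomorphic to the free product ℤ * ℤ/2ℤ; more precisely, the set of matrices [[α,β],[γ,δ]] ∈ PGL(2,ℂ) for which the group generated by [[α,β],[γ,δ]] and [[0,1],[1,0]] fails to be isomorphic to ℤ * ℤ/2ℤ is a countable union of proper Zariski-closed subsets of PGL(2,ℂ). -/
/-- `PGL(2, ℂ)` as the quotient of `GL(2, ℂ)` by its center. -/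
noncomputable abbrev PGL2C := GL (Fin 2) ℂ ⧸ Subgroup.center (GL (Fin 2) ℂ)

/-- A subset of `GL(2, ℂ)` is Zariski closed if it is the common zero set of a
family of polynomials in the matrix entries. -/
def IsZariskiClosedGL (C : Set (GL (Fin 2) ℂ)) : Prop :=
  ∃ P : Set (MvPolynomial (Fin 2 × Fin 2) ℂ),
    C = {g : GL (Fin 2) ℂ | ∀ q ∈ P,
      MvPolynomial.eval (fun ij => (g : Matrix (Fin 2) (Fin 2) ℂ) ij.1 ij.2) q = 0}

/-- A subset of `PGL(2, ℂ)` is Zariski closed if its preimage in `GL(2, ℂ)` is. -/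
def IsZariskiClosedPGL (C : Set PGL2C) : Prop :=
  IsZariskiClosedGL ((QuotientGroup.mk' (Subgroup.center (GL (Fin 2) ℂ))) ⁻¹' C)


open Matrix Monoid Projectivization Pointwise

noncomputable section Stmt7Aux

abbrev MZ' := Multiplicative ℤ
abbrev M2' := Multiplicative (ZMod 2)

/-! ### The center of `GL(2, ℂ)` -/

lemma mem_center_GL2_iff {A : GL (Fin 2) ℂ} :
    A ∈ Subgroup.center (GL (Fin 2) ℂ) ↔
      ∃ c : ℂ, (A : Matrix (Fin 2) (Fin 2) ℂ) = c • (1 : Matrix (Fin 2) (Fin 2) ℂ) := by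
  constructor
  · intro hA
    have h : ∀ t : TransvectionStruct (Fin 2) ℂ,
        Commute t.toMatrix (A : Matrix (Fin 2) (Fin 2) ℂ) := by
      intro t
      have hdet : (t.toMatrix).det ≠ 0 := by rw [t.det]; exact one_ne_zero
      have := (Subgroup.mem_center_iff.mp hA)
        (Matrix.GeneralLinearGroup.mkOfDetNeZero t.toMatrix hdet)
      have h2 := congrArg (Units.val) this
      simpa [Commute, SemiconjBy] using h2
    obtain ⟨c, hc⟩ := Matrix.mem_range_scalar_of_commute_transvectionStruct h
    exact ⟨c, by
      rw [← hc]; ext i j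
      simp [Matrix.scalar_apply, Matrix.smul_apply, Matrix.one_apply, Matrix.diagonal_apply]⟩
  · rintro ⟨c, hc⟩
    refine Subgroup.mem_center_iff.mpr fun B => ?_
    ext
    simp only [Units.val_mul, hc]
    rw [smul_mul_assoc, mul_smul_comm, one_mul, mul_one]

def piGL : GL (Fin 2) ℂ →* PGL2C := QuotientGroup.mk' (Subgroup.center (GL (Fin 2) ℂ))

lemma piGL_eq_one_iff {A : GL (Fin 2) ℂ} :
    piGL A = 1 ↔
      ∃ c : ℂ, (A : Matrix (Fin 2) (Fin 2) ℂ) = c • (1 : Matrix (Fin 2) (Fin 2) ℂ) := by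
  rw [← mem_center_GL2_iff]
  exact QuotientGroup.eq_one_iff A

/-! ### The action of `PGL(2, ℂ)` on the projective line -/

abbrev P1 := Projectivization ℂ (Fin 2 → ℂ)

lemma mulVecLin_injective (g : GL (Fin 2) ℂ) :
    Function.Injective (Matrix.mulVecLin (g : Matrix (Fin 2) (Fin 2) ℂ)) := by
  have h1 : Matrix.mulVecLin ((g⁻¹ : GL (Fin 2) ℂ) : Matrix (Fin 2) (Fin 2) ℂ) ∘ₗ
      Matrix.mulVecLin (g : Matrix (Fin 2) (Fin 2) ℂ) = LinearMap.id := by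
    rw [← Matrix.mulVecLin_mul, ← Units.val_mul, inv_mul_cancel, Units.val_one,
      Matrix.mulVecLin_one]
  intro x y hxy
  have h2 := congrArg
    (fun v => Matrix.mulVecLin ((g⁻¹ : GL (Fin 2) ℂ) : Matrix (Fin 2) (Fin 2) ℂ) v) hxy
  simp only [← LinearMap.comp_apply, h1, LinearMap.id_apply] at h2
  exact h2

lemma Projectivization.map_eq_of_eq {K V W : Type*} [Field K] [AddCommGroup V] [Module K V]
    [AddCommGroup W] [Module K W] {f f' : V →ₗ[K] W} (h : f = f') (hf : Function.Injective f) :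
    Projectivization.map f hf = Projectivization.map f' (h ▸ hf) := by subst h; rfl

lemma map_cancel (g h : GL (Fin 2) ℂ) (hgh : g * h = 1) (p : P1) :
    Projectivization.map (Matrix.mulVecLin (g : Matrix (Fin 2) (Fin 2) ℂ)) (mulVecLin_injective g)
      (Projectivization.map (Matrix.mulVecLin (h : Matrix (Fin 2) (Fin 2) ℂ))
        (mulVecLin_injective h) p) = p := by
  have h2 : (Matrix.mulVecLin (g : Matrix (Fin 2) (Fin 2) ℂ)).comp
      (Matrix.mulVecLin (h : Matrix (Fin 2) (Fin 2) ℂ)) = LinearMap.id := by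
    rw [← Matrix.mulVecLin_mul, ← Units.val_mul, hgh, Units.val_one, Matrix.mulVecLin_one]
  have e1 := congrFun (Projectivization.map_comp
    (Matrix.mulVecLin (h : Matrix (Fin 2) (Fin 2) ℂ)) (mulVecLin_injective h)
    (Matrix.mulVecLin (g : Matrix (Fin 2) (Fin 2) ℂ)) (mulVecLin_injective g)) p
  refine Eq.trans e1.symm ?_
  rw [Projectivization.map_eq_of_eq h2]
  simp [Projectivization.map_id]

/-- `GL(2,ℂ)` acting on `P1` as permutations. -/
def permOfGL : GL (Fin 2) ℂ →* Equiv.Perm P1 where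
  toFun g :=
    { toFun := Projectivization.map (Matrix.mulVecLin (g : Matrix (Fin 2) (Fin 2) ℂ))
        (mulVecLin_injective g)
      invFun := Projectivization.map
        (Matrix.mulVecLin ((g⁻¹ : GL (Fin 2) ℂ) : Matrix (Fin 2) (Fin 2) ℂ))
        (mulVecLin_injective g⁻¹)
      left_inv := fun p => map_cancel g⁻¹ g (inv_mul_cancel g) p
      right_inv := fun p => map_cancel g g⁻¹ (mul_inv_cancel g) p }
  map_one' := by
    ext p
    simp only [Units.val_one, Equiv.coe_fn_mk, Equiv.Perm.coe_one, id_eq]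
    rw [Projectivization.map_eq_of_eq Matrix.mulVecLin_one]
    simp [Projectivization.map_id]
  map_mul' g h := by
    ext p
    simp only [Units.val_mul, Equiv.coe_fn_mk, Equiv.Perm.coe_mul, Function.comp_apply]
    have e0 := congrFun (Projectivization.map_eq_of_eq
      (Matrix.mulVecLin_mul (g : Matrix (Fin 2) (Fin 2) ℂ) (h : Matrix (Fin 2) (Fin 2) ℂ))
      (by rw [Matrix.mulVecLin_mul (g : Matrix (Fin 2) (Fin 2) ℂ) (h : Matrix (Fin 2) (Fin 2) ℂ)]
          exact (mulVecLin_injective g).comp (mulVecLin_injective h))) p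
    refine Eq.trans e0 ?_
    exact congrFun (Projectivization.map_comp
      (Matrix.mulVecLin (h : Matrix (Fin 2) (Fin 2) ℂ)) (mulVecLin_injective h)
      (Matrix.mulVecLin (g : Matrix (Fin 2) (Fin 2) ℂ)) (mulVecLin_injective g)) p

lemma permOfGL_apply_mk (g : GL (Fin 2) ℂ) (v : Fin 2 → ℂ) (hv : v ≠ 0)
    (hv' : (g : Matrix (Fin 2) (Fin 2) ℂ) *ᵥ v ≠ 0) :
    permOfGL g (Projectivization.mk ℂ v hv) =
      Projectivization.mk ℂ ((g : Matrix (Fin 2) (Fin 2) ℂ) *ᵥ v) hv' := by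
  rfl

lemma center_le_ker : Subgroup.center (GL (Fin 2) ℂ) ≤ permOfGL.ker := by
  intro A hA
  obtain ⟨c, hc⟩ := mem_center_GL2_iff.mp hA
  have hc0 : c ≠ 0 := by
    intro h
    subst h
    have hd : (A : Matrix (Fin 2) (Fin 2) ℂ).det ≠ 0 := by
      have := Matrix.isUnit_iff_isUnit_det (A : Matrix (Fin 2) (Fin 2) ℂ) |>.mp ⟨A, rfl⟩
      exact this.ne_zero
    rw [hc] at hd
    simp at hd
  rw [MonoidHom.mem_ker]
  ext p
  induction p using Projectivization.ind with
  | h v hv =>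
    have hv' : (A : Matrix (Fin 2) (Fin 2) ℂ) *ᵥ v ≠ 0 := by
      rw [hc]
      intro h
      apply hv
      funext i
      have := congrFun h i
      simpa [Matrix.smul_mulVec, Matrix.one_mulVec, hc0] using this
    rw [permOfGL_apply_mk A v hv hv', Equiv.Perm.coe_one, id_eq]
    apply (Projectivization.mk_eq_mk_iff ℂ _ _ _ _).mpr
    refine ⟨Units.mk0 c hc0, ?_⟩
    rw [hc]
    funext i
    simp [Matrix.smul_mulVec, Matrix.one_mulVec]

/-- The action of `PGL(2,ℂ)` on the projective line. -/
def permOfPGL : PGL2C →* Equiv.Perm P1 :=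
  QuotientGroup.lift (Subgroup.center (GL (Fin 2) ℂ)) permOfGL center_le_ker

instance : MulAction PGL2C P1 := MulAction.compHom _ permOfPGL

lemma pgl_smul_mk (g : GL (Fin 2) ℂ) (v : Fin 2 → ℂ) (hv : v ≠ 0)
    (hv' : (g : Matrix (Fin 2) (Fin 2) ℂ) *ᵥ v ≠ 0) :
    (piGL g) • (Projectivization.mk ℂ v hv) =
      Projectivization.mk ℂ ((g : Matrix (Fin 2) (Fin 2) ℂ) *ᵥ v) hv' := by
  show permOfPGL (piGL g) (Projectivization.mk ℂ v hv) =
    Projectivization.mk ℂ ((g : Matrix (Fin 2) (Fin 2) ℂ) *ᵥ v) hv'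
  rw [permOfPGL]
  show QuotientGroup.lift _ permOfGL center_le_ker
    ((QuotientGroup.mk' (Subgroup.center (GL (Fin 2) ℂ))) g) _ = _
  rw [QuotientGroup.mk'_apply, QuotientGroup.lift_mk]
  exact permOfGL_apply_mk g v hv hv'

/-! ### Specific elements: the parabolic `!![1,3;0,1]` and the involution `!![0,1;1,0]` -/

/-- The unit `!![1, 3n; 0, 1]`. -/
def uInt (n : ℤ) : GL (Fin 2) ℂ :=
  ⟨!![1, 3 * (n : ℂ); 0, 1], !![1, -(3 * (n : ℂ)); 0, 1],
    by ext i j; fin_cases i <;> fin_cases j <;> simp [Matrix.mul_apply, Fin.sum_univ_two],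
    by ext i j; fin_cases i <;> fin_cases j <;> simp [Matrix.mul_apply, Fin.sum_univ_two]⟩

lemma uInt_val (n : ℤ) : (uInt n : Matrix (Fin 2) (Fin 2) ℂ) = !![1, 3 * (n : ℂ); 0, 1] := rfl

lemma uInt_add (m n : ℤ) : uInt (m + n) = uInt m * uInt n := by
  ext i j
  fin_cases i <;> fin_cases j <;>
    simp [uInt, Matrix.mul_apply, Fin.sum_univ_two] <;> push_cast <;> ring

lemma uInt_zero : uInt 0 = 1 := by
  ext i j
  fin_cases i <;> fin_cases j <;> simp [uInt]

/-- `uInt` as a monoid hom from `Multiplicative ℤ`. -/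
def uHom : Multiplicative ℤ →* GL (Fin 2) ℂ where
  toFun n := uInt n.toAdd
  map_one' := uInt_zero
  map_mul' m n := uInt_add m.toAdd n.toAdd

lemma uInt_eq_pow (n : ℤ) : uInt n = (uInt 1) ^ n := by
  have h : uHom = zpowersHom (GL (Fin 2) ℂ) (uInt 1) := by
    apply MonoidHom.ext_mint
    simp [uHom, zpowersHom]
  have h2 := congrFun (congrArg (fun f => f.toFun) h) (Multiplicative.ofAdd n)
  simpa [uHom, zpowersHom] using h2

/-- The unit with matrix `!![0,1;1,0]`. -/
def sU : GL (Fin 2) ℂ :=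
  ⟨!![0, 1; 1, 0], !![0, 1; 1, 0],
    by ext i j; fin_cases i <;> fin_cases j <;> simp [Matrix.mul_apply, Fin.sum_univ_two],
    by ext i j; fin_cases i <;> fin_cases j <;> simp [Matrix.mul_apply, Fin.sum_univ_two]⟩

lemma sU_val : (sU : Matrix (Fin 2) (Fin 2) ℂ) = !![0, 1; 1, 0] := rfl

def sigma : PGL2C := piGL sU

lemma sigma_sq : sigma * sigma = 1 := by
  rw [sigma, ← _root_.map_mul]
  have h : sU * sU = 1 := by
    ext i j
    fin_cases i <;> fin_cases j <;> simp [sU, Matrix.mul_apply, Fin.sum_univ_two]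
  rw [h, _root_.map_one]

/-- Hom from `Multiplicative (ZMod 2)` sending the generator to an element of order dividing 2. -/
def zmod2Hom {G : Type*} [Group G] (x : G) (hx : x * x = 1) :
    Multiplicative (ZMod 2) →* G :=
  AddMonoidHom.toMultiplicativeLeft
    (ZMod.lift 2 ⟨(zmultiplesHom (Additive G)) (Additive.ofMul x), by
      simp only [zmultiplesHom_apply]
      rw [show ((2:ℕ):ℤ) • Additive.ofMul x = Additive.ofMul (x ^ (2:ℤ)) from
        (ofMul_zpow _ _).symm]
      rw [zpow_two, hx]
      rfl⟩)

lemma zmod2Hom_gen {G : Type*} [Group G] (x : G) (hx : x * x = 1) :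
    zmod2Hom x hx (Multiplicative.ofAdd (1 : ZMod 2)) = x := by
  rw [zmod2Hom]
  simp only [AddMonoidHom.coe_toMultiplicativeLeft, Function.comp_apply]
  have h1 : ((Multiplicative.ofAdd (1 : ZMod 2)).toAdd) = ((1 : ℤ) : ZMod 2) := by simp
  rw [h1, ZMod.lift_coe]
  show Additive.toMul ((1 : ℤ) • Additive.ofMul x) = x
  simp

/-! ### The binary coproduct as an indexed coproduct -/

/-- Index family for the binary free product as `CoprodI`. -/
abbrev Hfam : Bool → Type := fun b => cond b MZ' M2'

instance HfamGroup : ∀ b, Group (Hfam b) := fun b => by cases b <;> dsimp [Hfam] <;> infer_instance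

/-- The equivalence between the binary coproduct and the indexed coproduct. -/
def coprodEquivI : Coprod MZ' M2' ≃* CoprodI Hfam := by
  refine MonoidHom.toMulEquiv
    (Coprod.lift (CoprodI.of (M := Hfam) (i := true)) (CoprodI.of (M := Hfam) (i := false)))
    (CoprodI.lift (fun b => match b with
      | true => (Coprod.inl : MZ' →* Coprod MZ' M2')
      | false => (Coprod.inr : M2' →* Coprod MZ' M2'))) ?_ ?_
  · apply Coprod.hom_ext <;> refine MonoidHom.ext fun x => ?_ <;>
      simp only [MonoidHom.coe_comp, Function.comp_apply, Coprod.lift_apply_inl, Coprod.lift_apply_inr,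
        CoprodI.lift_of, MonoidHom.id_apply]
  · apply CoprodI.ext_hom
    intro b
    cases b <;> ext x <;>
      simp only [MonoidHom.comp_apply, CoprodI.lift_of, MonoidHom.id_apply] <;>
      simp [Coprod.lift_apply_inl, Coprod.lift_apply_inr]

lemma coprodEquivI_inl (m : MZ') :
    coprodEquivI (Coprod.inl m) = CoprodI.of (M := Hfam) (i := true) m := by
  show (Coprod.lift (CoprodI.of (M := Hfam) (i := true)) (CoprodI.of (M := Hfam) (i := false)))
    (Coprod.inl m) = _
  rw [Coprod.lift_apply_inl]

lemma coprodEquivI_inr (m : M2') :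
    coprodEquivI (Coprod.inr m) = CoprodI.of (M := Hfam) (i := false) m := by
  show (Coprod.lift (CoprodI.of (M := Hfam) (i := true)) (CoprodI.of (M := Hfam) (i := false)))
    (Coprod.inr m) = _
  rw [Coprod.lift_apply_inr]

/-! ### Ping pong -/

def Xg : Set P1 := {p | ‖p.rep 1‖ < ‖p.rep 0‖}
def Xs : Set P1 := {p | ‖p.rep 0‖ < ‖p.rep 1‖}

lemma mk_congr {v w : Fin 2 → ℂ} (h : v = w) (hv : v ≠ 0) :
    Projectivization.mk ℂ v hv = Projectivization.mk ℂ w (h ▸ hv) := by subst h; rfl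

lemma rep_scale (v : Fin 2 → ℂ) (hv : v ≠ 0) :
    ∃ a : ℂˣ, ∀ i, (Projectivization.mk ℂ v hv).rep i = (a : ℂ) * v i := by
  obtain ⟨a, ha⟩ := Projectivization.exists_smul_eq_mk_rep ℂ v hv
  exact ⟨a, fun i => by rw [← ha]; rfl⟩

lemma mk_mem_Xg_iff {v : Fin 2 → ℂ} (hv : v ≠ 0) :
    Projectivization.mk ℂ v hv ∈ Xg ↔ ‖v 1‖ < ‖v 0‖ := by
  obtain ⟨a, ha⟩ := rep_scale v hv
  have hpos : 0 < ‖(a : ℂ)‖ := by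
    simp [a.ne_zero]
  simp only [Xg, Set.mem_setOf_eq, ha, norm_mul]
  exact mul_lt_mul_iff_right₀ hpos

lemma mk_mem_Xs_iff {v : Fin 2 → ℂ} (hv : v ≠ 0) :
    Projectivization.mk ℂ v hv ∈ Xs ↔ ‖v 0‖ < ‖v 1‖ := by
  obtain ⟨a, ha⟩ := rep_scale v hv
  have hpos : 0 < ‖(a : ℂ)‖ := by
    simp [a.ne_zero]
  simp only [Xs, Set.mem_setOf_eq, ha, norm_mul]
  exact mul_lt_mul_iff_right₀ hpos

def g0 : PGL2C := piGL (uInt 1)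

def ffam : ∀ b, Hfam b →* PGL2C := fun b =>
  match b with
  | true => zpowersHom PGL2C g0
  | false => zmod2Hom sigma sigma_sq

def XX : Bool → Set P1 := fun b => cond b Xg Xs

lemma XX_nonempty : ∀ b, (XX b).Nonempty := by
  intro b
  cases b
  · refine ⟨Projectivization.mk ℂ ![0, 1] (by simp [funext_iff, Fin.forall_fin_two]), ?_⟩
    rw [show XX false = Xs from rfl, mk_mem_Xs_iff]
    simp
  · refine ⟨Projectivization.mk ℂ ![1, 0] (by simp [funext_iff, Fin.forall_fin_two]), ?_⟩
    rw [show XX true = Xg from rfl, mk_mem_Xg_iff]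
    simp

lemma XX_disj : Pairwise (Function.onFun Disjoint XX) := by
  have h : Disjoint Xg Xs := by
    rw [Set.disjoint_left]
    intro p hp hq
    simp only [Xg, Xs, Set.mem_setOf_eq] at hp hq
    linarith
  intro i j hij
  cases i <;> cases j <;> simp_all [XX]
  · exact h.symm
  · exact h

lemma pp_true_false : ∀ h : MZ', h ≠ 1 → (ffam true h) • XX false ⊆ XX true := by
  intro h hne
  set n : ℤ := h.toAdd with hn
  have hn0 : n ≠ 0 := by
    intro h0
    apply hne
    have : h = Multiplicative.ofAdd (0 : ℤ) := by
      rw [← h0, hn]; rfl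
    simpa using this
  intro p hp
  obtain ⟨q, hq, rfl⟩ := hp
  induction q using Projectivization.ind with
  | h v hv =>
  replace hq := (mk_mem_Xs_iff hv).mp hq
  have hv1 : v 1 ≠ 0 := by
    intro h0
    rw [h0] at hq
    simp only [norm_zero] at hq
    exact (norm_nonneg _).not_gt hq
  have hw : (uInt n : Matrix (Fin 2) (Fin 2) ℂ) *ᵥ v = ![v 0 + 3 * n * v 1, v 1] := by
    rw [uInt_val]
    funext i
    fin_cases i <;> simp [Matrix.mulVec, dotProduct, Fin.sum_univ_two] <;> ring
  have hw0 : ![v 0 + 3 * (n : ℂ) * v 1, v 1] ≠ 0 := by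
    intro h0
    exact hv1 (congrFun h0 1)
  have hsmul : (ffam true h) • Projectivization.mk ℂ v hv =
      Projectivization.mk ℂ ![v 0 + 3 * n * v 1, v 1] hw0 := by
    show (zpowersHom PGL2C g0 h) • _ = _
    rw [zpowersHom_apply, ← hn, g0, ← map_zpow, ← uInt_eq_pow]
    rw [pgl_smul_mk (uInt n) v hv (hw ▸ hw0)]
    exact mk_congr hw _
  show ((ffam true) h • Projectivization.mk ℂ v hv) ∈ Xg
  rw [hsmul]
  rw [mk_mem_Xg_iff]
  simp only [Matrix.cons_val_one, Matrix.head_cons, Matrix.cons_val_zero]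
  have h3n : (3 : ℝ) ≤ ‖3 * (n : ℂ)‖ := by
    have e1 : ‖3 * (n : ℂ)‖ = 3 * ‖((n : ℤ) : ℂ)‖ := by
      rw [norm_mul]
      norm_num
    have e2 : ‖((n : ℤ) : ℂ)‖ = |((n : ℤ) : ℝ)| := Complex.norm_intCast n
    have e3 : (1 : ℝ) ≤ |((n : ℤ) : ℝ)| := by
      have := Int.one_le_abs hn0
      rw [← Int.cast_abs]
      exact_mod_cast this
    rw [e1, e2]
    linarith
  have habs : ‖3 * (n : ℂ) * v 1‖ - ‖v 0‖
      ≤ ‖v 0 + 3 * n * v 1‖ := by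
    have h5 := norm_add_le (v 0 + 3 * n * v 1) (-(v 0))
    simp only [norm_neg] at h5
    calc ‖3 * (n:ℂ) * v 1‖ - ‖v 0‖
        = ‖(v 0 + 3 * n * v 1) + (-(v 0))‖ - ‖v 0‖ := by ring_nf
      _ ≤ ‖v 0 + 3 * n * v 1‖ := by
          linarith
  have hmul : ‖3 * (n : ℂ) * v 1‖ = ‖3 * (n:ℂ)‖ * ‖v 1‖ :=
    norm_mul _ _
  have hv1pos : 0 < ‖v 1‖ := by
    simpa using hv1
  nlinarith [hq, habs, hmul, h3n, hv1pos]

lemma pp_false_true : ∀ h : M2', h ≠ 1 → (ffam false h) • XX true ⊆ XX false := by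
  intro h hne
  have hh : h = Multiplicative.ofAdd (1 : ZMod 2) := by
    revert hne
    revert h
    decide
  subst hh
  intro p hp
  obtain ⟨q, hq, rfl⟩ := hp
  induction q using Projectivization.ind with
  | h v hv =>
  replace hq := (mk_mem_Xg_iff hv).mp hq
  have hv0 : v 0 ≠ 0 := by
    intro h0
    rw [h0] at hq
    simp only [norm_zero] at hq
    exact (norm_nonneg _).not_gt hq
  have hw : (sU : Matrix (Fin 2) (Fin 2) ℂ) *ᵥ v = ![v 1, v 0] := by
    rw [sU_val]
    funext i
    fin_cases i <;> simp [Matrix.mulVec, dotProduct, Fin.sum_univ_two]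
  have hw0 : ![v 1, v 0] ≠ 0 := fun h0 => hv0 (congrFun h0 1)
  have hsmul : (ffam false (Multiplicative.ofAdd (1 : ZMod 2))) • Projectivization.mk ℂ v hv =
      Projectivization.mk ℂ ![v 1, v 0] hw0 := by
    have hf : ffam false (Multiplicative.ofAdd (1 : ZMod 2)) = sigma :=
      zmod2Hom_gen sigma sigma_sq
    rw [hf, sigma]
    rw [pgl_smul_mk sU v hv (hw ▸ hw0)]
    exact mk_congr hw _
  show ((ffam false) (Multiplicative.ofAdd (1 : ZMod 2)) • Projectivization.mk ℂ v hv) ∈ Xs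
  rw [hsmul]
  rw [mk_mem_Xs_iff]
  simpa using hq

lemma hcard : 3 ≤ Cardinal.mk Bool ∨ ∃ i, 3 ≤ Cardinal.mk (Hfam i) := by
  right
  refine ⟨true, ?_⟩
  have h : Cardinal.mk (Hfam true) = Cardinal.mk ℤ :=
    Cardinal.mk_congr Multiplicative.toAdd
  rw [h, Cardinal.mk_int]
  exact (Cardinal.nat_lt_aleph0 3).le

lemma ffam_lift_injective : Function.Injective (CoprodI.lift ffam) :=
  CoprodI.lift_injective_of_ping_pong ffam hcard XX XX_nonempty XX_disj
    (by
      intro i j hij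
      cases i <;> cases j <;> first
        | exact absurd rfl hij
        | exact pp_false_true
        | exact pp_true_false)

/-- The evaluation homomorphism `φ_g`. -/
def phi (g : PGL2C) : Coprod MZ' M2' →* PGL2C :=
  Coprod.lift (zpowersHom PGL2C g) (zmod2Hom sigma sigma_sq)

lemma phi_g0_injective : Function.Injective (phi g0) := by
  have heq : phi g0 = (CoprodI.lift ffam).comp coprodEquivI.toMonoidHom := by
    apply Coprod.hom_ext
    · ext m
      simp only [MonoidHom.comp_apply, MulEquiv.coe_toMonoidHom, phi, Coprod.lift_apply_inl,
        coprodEquivI_inl, CoprodI.lift_of]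
      rfl
    · ext m
      simp only [MonoidHom.comp_apply, MulEquiv.coe_toMonoidHom, phi, Coprod.lift_apply_inr,
        coprodEquivI_inr, CoprodI.lift_of]
      rfl
  rw [heq, MonoidHom.coe_comp]
  exact ffam_lift_injective.comp (EquivLike.injective coprodEquivI)

/-! ### Words -/

def letterW : Fin 3 → Coprod MZ' M2' :=
  fun l => if l = 0 then Coprod.inl (Multiplicative.ofAdd (1 : ℤ))
    else if l = 1 then Coprod.inl (Multiplicative.ofAdd (-1 : ℤ))
    else Coprod.inr (Multiplicative.ofAdd (1 : ZMod 2))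

def wordOf (L : List (Fin 3)) : Coprod MZ' M2' := (L.map letterW).prod

lemma wordOf_append (L₁ L₂ : List (Fin 3)) : wordOf (L₁ ++ L₂) = wordOf L₁ * wordOf L₂ := by
  rw [wordOf, List.map_append, List.prod_append]; rfl

lemma wordOf_inl : ∀ n : ℤ, ∃ L, wordOf L = Coprod.inl (Multiplicative.ofAdd n) := by
  have hpos : ∀ k : ℕ, wordOf (List.replicate k 0) = Coprod.inl (Multiplicative.ofAdd (k : ℤ)) := by
    intro k
    rw [wordOf, List.map_replicate, List.prod_replicate]
    show (Coprod.inl (Multiplicative.ofAdd (1:ℤ))) ^ k = _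
    rw [← map_pow]
    congr 1
    rw [← ofAdd_nsmul]
    congr 1
    simp
  have hneg : ∀ k : ℕ, wordOf (List.replicate k 1) = Coprod.inl (Multiplicative.ofAdd (-(k : ℤ))) := by
    intro k
    rw [wordOf, List.map_replicate, List.prod_replicate]
    show (Coprod.inl (Multiplicative.ofAdd (-1:ℤ))) ^ k = _
    rw [← map_pow]
    congr 1
    rw [← ofAdd_nsmul]
    congr 1
    simp
  intro n
  rcases le_or_gt 0 n with h | h
  · obtain ⟨k, rfl⟩ := Int.eq_ofNat_of_zero_le h
    exact ⟨_, hpos k⟩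
  · obtain ⟨k, hk⟩ : ∃ k : ℕ, n = -(k : ℤ) := ⟨n.natAbs, by omega⟩
    exact ⟨_, hk ▸ hneg k⟩

lemma wordOf_surjective : ∀ w : Coprod MZ' M2', ∃ L, wordOf L = w := by
  intro w
  induction w using Coprod.induction_on with
  | inl m => simpa using wordOf_inl m.toAdd
  | inr k =>
    have aux : ∀ k' : M2', k' = 1 ∨ k' = Multiplicative.ofAdd (1 : ZMod 2) := by decide
    have h := aux k
    rcases h with rfl | rfl
    · exact ⟨[], by simpa [wordOf] using (map_one (Coprod.inr : M2' →* Coprod MZ' M2')).symm⟩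
    · exact ⟨[2], by simp [wordOf, letterW]⟩
  | mul x y ihx ihy =>
    obtain ⟨L₁, rfl⟩ := ihx
    obtain ⟨L₂, rfl⟩ := ihy
    exact ⟨L₁ ++ L₂, wordOf_append L₁ L₂⟩

lemma wordOf_two : wordOf [2] = Coprod.inr (Multiplicative.ofAdd (1 : ZMod 2)) := by
  simp [wordOf, letterW]

lemma det_ne_zero' (g : GL (Fin 2) ℂ) : (g : Matrix (Fin 2) (Fin 2) ℂ).det ≠ 0 :=
  ((Matrix.isUnit_iff_isUnit_det _).mp ⟨g, rfl⟩).ne_zero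

/-- Scalar unit `det g • 1`. -/
def dU (g : GL (Fin 2) ℂ) : GL (Fin 2) ℂ :=
  ⟨(g : Matrix (Fin 2) (Fin 2) ℂ).det • 1, ((g : Matrix (Fin 2) (Fin 2) ℂ).det)⁻¹ • 1,
    by rw [smul_mul_smul_comm, one_mul, mul_inv_cancel₀ (det_ne_zero' g), one_smul],
    by rw [smul_mul_smul_comm, one_mul, inv_mul_cancel₀ (det_ne_zero' g), one_smul]⟩

lemma dU_central (g : GL (Fin 2) ℂ) : dU g ∈ Subgroup.center (GL (Fin 2) ℂ) :=
  mem_center_GL2_iff.mpr ⟨_, rfl⟩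

def aGL (g : GL (Fin 2) ℂ) : GL (Fin 2) ℂ := dU g * g⁻¹

lemma aGL_val (g : GL (Fin 2) ℂ) :
    (aGL g : Matrix (Fin 2) (Fin 2) ℂ) = (g : Matrix (Fin 2) (Fin 2) ℂ).adjugate := by
  show ((g : Matrix (Fin 2) (Fin 2) ℂ).det • (1 : Matrix (Fin 2) (Fin 2) ℂ)) *
    (g⁻¹ : GL (Fin 2) ℂ).val = _
  rw [Matrix.coe_units_inv, smul_mul_assoc, one_mul, Matrix.inv_def, smul_smul,
    Ring.inverse_eq_inv', mul_inv_cancel₀ (det_ne_zero' g), one_smul]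

def letterGL (g : GL (Fin 2) ℂ) : Fin 3 → GL (Fin 2) ℂ :=
  fun l => if l = 0 then g else if l = 1 then aGL g else sU

def wordGL (g : GL (Fin 2) ℂ) (L : List (Fin 3)) : GL (Fin 2) ℂ :=
  (L.map (letterGL g)).prod

lemma piGL_letter (g : GL (Fin 2) ℂ) (l : Fin 3) :
    piGL (letterGL g l) = phi (piGL g) (letterW l) := by
  fin_cases l
  · show piGL g = phi (piGL g) (Coprod.inl (Multiplicative.ofAdd (1:ℤ)))
    rw [phi, Coprod.lift_apply_inl, zpowersHom_apply]
    simp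
  · show piGL (aGL g) = phi (piGL g) (Coprod.inl (Multiplicative.ofAdd (-1:ℤ)))
    rw [phi, Coprod.lift_apply_inl, zpowersHom_apply, aGL, _root_.map_mul]
    have h1 : piGL (dU g) = 1 := (QuotientGroup.eq_one_iff _).mpr (dU_central g)
    rw [h1, one_mul]
    simp
  · show piGL sU = phi (piGL g) (Coprod.inr (Multiplicative.ofAdd (1 : ZMod 2)))
    rw [phi, Coprod.lift_apply_inr, zmod2Hom_gen, sigma]

lemma piGL_wordGL (g : GL (Fin 2) ℂ) (L : List (Fin 3)) :
    piGL (wordGL g L) = phi (piGL g) (wordOf L) := by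
  rw [wordGL, wordOf, map_list_prod, map_list_prod, List.map_map, List.map_map]
  congr 1
  exact List.map_congr_left (fun l _ => piGL_letter g l)

/-! ### Polynomial matrices -/

abbrev MP := MvPolynomial (Fin 2 × Fin 2) ℂ

def Xmat : Matrix (Fin 2) (Fin 2) MP := Matrix.of fun i j => MvPolynomial.X (i, j)

def letterP : Fin 3 → Matrix (Fin 2) (Fin 2) MP :=
  fun l => if l = 0 then Xmat else if l = 1 then Xmat.adjugate
    else (MvPolynomial.C : ℂ →+* MP).mapMatrix !![0, 1; 1, 0]

def wordP (L : List (Fin 3)) : Matrix (Fin 2) (Fin 2) MP := (L.map letterP).prod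

def evalRH (g : GL (Fin 2) ℂ) : MP →+* ℂ :=
  MvPolynomial.eval (fun ij => (g : Matrix (Fin 2) (Fin 2) ℂ) ij.1 ij.2)

lemma eval_letterP (g : GL (Fin 2) ℂ) (l : Fin 3) :
    (evalRH g).mapMatrix (letterP l) = (letterGL g l : Matrix (Fin 2) (Fin 2) ℂ) := by
  fin_cases l
  · show (evalRH g).mapMatrix Xmat = (g : Matrix (Fin 2) (Fin 2) ℂ)
    ext i j
    simp [Xmat, evalRH, RingHom.mapMatrix_apply, Matrix.map_apply]
  · show (evalRH g).mapMatrix Xmat.adjugate = (aGL g : Matrix (Fin 2) (Fin 2) ℂ)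
    rw [aGL_val, Matrix.adjugate_fin_two, Matrix.adjugate_fin_two]
    ext i j
    fin_cases i <;> fin_cases j <;>
      simp [Xmat, evalRH, RingHom.mapMatrix_apply, Matrix.map_apply]
  · show (evalRH g).mapMatrix ((MvPolynomial.C : ℂ →+* MP).mapMatrix !![0, 1; 1, 0]) =
      (sU : Matrix (Fin 2) (Fin 2) ℂ)
    rw [sU_val]
    ext i j
    fin_cases i <;> fin_cases j <;>
      simp [evalRH, RingHom.mapMatrix_apply, Matrix.map_apply]

lemma eval_wordP (g : GL (Fin 2) ℂ) (L : List (Fin 3)) :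
    (evalRH g).mapMatrix (wordP L) = (wordGL g L : Matrix (Fin 2) (Fin 2) ℂ) := by
  have h1 : (wordGL g L : Matrix (Fin 2) (Fin 2) ℂ) =
      ((L.map (letterGL g)).map (Units.coeHom (Matrix (Fin 2) (Fin 2) ℂ))).prod := by
    rw [wordGL, ← map_list_prod]
    rfl
  rw [h1, wordP, map_list_prod, List.map_map, List.map_map]
  congr 1
  exact List.map_congr_left (fun l _ => eval_letterP g l)

/-- The polynomials cutting out "word evaluates to a scalar". -/
def polysOf (L : List (Fin 3)) : Set MP :=
  {(wordP L) 0 1, (wordP L) 1 0, (wordP L) 0 0 - (wordP L) 1 1}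

def DSet (L : List (Fin 3)) : Set (GL (Fin 2) ℂ) :=
  {g : GL (Fin 2) ℂ | ∀ q ∈ polysOf L,
    MvPolynomial.eval (fun ij => (g : Matrix (Fin 2) (Fin 2) ℂ) ij.1 ij.2) q = 0}

lemma entry_eval (g : GL (Fin 2) ℂ) (L : List (Fin 3)) (i j : Fin 2) :
    MvPolynomial.eval (fun ij => (g : Matrix (Fin 2) (Fin 2) ℂ) ij.1 ij.2) ((wordP L) i j) =
      (wordGL g L : Matrix (Fin 2) (Fin 2) ℂ) i j := by
  have h := congrArg (fun M => M i j) (eval_wordP g L)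
  simpa [RingHom.mapMatrix_apply, Matrix.map_apply, evalRH] using h

lemma mem_DSet_iff (g : GL (Fin 2) ℂ) (L : List (Fin 3)) :
    g ∈ DSet L ↔ phi (piGL g) (wordOf L) = 1 := by
  rw [← piGL_wordGL]
  show _ ↔ QuotientGroup.mk' _ (wordGL g L) = 1
  rw [QuotientGroup.mk'_apply, QuotientGroup.eq_one_iff, mem_center_GL2_iff]
  constructor
  · intro h
    have h1 := h _ (Set.mem_insert _ _)
    have h2 := h _ (Set.mem_insert_of_mem _ (Set.mem_insert _ _))
    have h3 := h _ (Set.mem_insert_of_mem _ (Set.mem_insert_of_mem _ rfl))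
    rw [entry_eval] at h1 h2
    rw [map_sub, entry_eval, entry_eval] at h3
    refine ⟨(wordGL g L : Matrix (Fin 2) (Fin 2) ℂ) 0 0, ?_⟩
    ext i j
    fin_cases i <;> fin_cases j
    · simp [Matrix.smul_apply, Matrix.one_apply]
    · simpa [Matrix.smul_apply, Matrix.one_apply] using h1
    · simpa [Matrix.smul_apply, Matrix.one_apply] using h2
    · simp only [Matrix.smul_apply, Matrix.one_apply, Fin.isValue, if_true, smul_eq_mul, mul_one,
        show ((⟨1, by norm_num⟩ : Fin 2) : Fin 2) = 1 from rfl, eq_self_iff_true]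
      linear_combination -h3
  · rintro ⟨c, hc⟩
    intro q hq
    rcases hq with rfl | rfl | rfl
    · rw [entry_eval, hc]; simp
    · rw [entry_eval, hc]; simp
    · rw [map_sub, entry_eval, entry_eval, hc]; simp

end Stmt7Aux

/-- The set of `g ∈ PGL(2, ℂ)` for which the group generated by `g` and the
involution `t ↦ 1/t` (the class of `[[0,1],[1,0]]`) fails to be isomorphic to the
free product `ℤ ∗ ℤ/2ℤ` is contained in a countable union of proper Zariski-closed
subsets of `PGL(2, ℂ)`. -/
theorem stmt7 (s : GL (Fin 2) ℂ)
    (hs : (s : Matrix (Fin 2) (Fin 2) ℂ) = !![0, 1; 1, 0]) :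
    ∃ C : ℕ → Set PGL2C,
      (∀ i, IsZariskiClosedPGL (C i) ∧ C i ≠ Set.univ) ∧
      ∀ g : PGL2C, g ∉ ⋃ i, C i →
        Nonempty
          ((Subgroup.closure {g, QuotientGroup.mk' (Subgroup.center (GL (Fin 2) ℂ)) s} :
              Subgroup PGL2C) ≃*
            Monoid.Coprod (Multiplicative ℤ) (Multiplicative (ZMod 2))) := by
  have hsU : s = sU := Units.ext (hs.trans sU_val.symm)
  subst hsU
  classical
  set CL : List (Fin 3) → Set PGL2C := fun L => {p | phi p (wordOf L) = 1} with hCL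
  have hpre : ∀ L, (QuotientGroup.mk' (Subgroup.center (GL (Fin 2) ℂ))) ⁻¹' CL L = DSet L := by
    intro L
    ext g
    exact (mem_DSet_iff g L).symm
  have hclosed : ∀ L, IsZariskiClosedPGL (CL L) := fun L => ⟨polysOf L, hpre L⟩
  have hproper : ∀ L, wordOf L ≠ 1 → CL L ≠ Set.univ := by
    intro L hL hU
    apply hL
    apply (injective_iff_map_eq_one (phi g0)).mp phi_g0_injective
    have hmem : g0 ∈ CL L := hU ▸ Set.mem_univ g0
    exact hmem
  have haux : ∀ k : M2', k = 1 ∨ k = Multiplicative.ofAdd (1 : ZMod 2) := by decide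
  have hT : Nonempty {L : List (Fin 3) // wordOf L ≠ 1} := by
    refine ⟨⟨[2], ?_⟩⟩
    rw [wordOf_two]
    intro h
    have h2 : (Multiplicative.ofAdd (1 : ZMod 2)) = 1 :=
      Monoid.Coprod.inr_injective (h.trans (map_one (Monoid.Coprod.inr : M2' →* Monoid.Coprod MZ' M2')).symm)
    exact absurd h2 (by decide)
  obtain ⟨e, he⟩ := exists_surjective_nat {L : List (Fin 3) // wordOf L ≠ 1}
  refine ⟨fun i => CL (e i).1, fun i => ⟨hclosed _, hproper _ (e i).2⟩, ?_⟩
  intro g hg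
  have hinj : Function.Injective (phi g) := by
    rw [injective_iff_map_eq_one]
    intro w hw
    by_contra hw1
    obtain ⟨L, rfl⟩ := wordOf_surjective w
    obtain ⟨i, hi⟩ := he ⟨L, hw1⟩
    refine hg (Set.mem_iUnion.mpr ⟨i, ?_⟩)
    rw [hi]
    exact hw
  have hrange : (phi g).range = Subgroup.closure {g, piGL sU} := by
    apply le_antisymm
    · rintro x ⟨w, rfl⟩
      induction w using Monoid.Coprod.induction_on with
      | inl m =>
        rw [phi, Monoid.Coprod.lift_apply_inl, zpowersHom_apply]
        exact zpow_mem (Subgroup.subset_closure (Set.mem_insert _ _)) _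
      | inr k =>
        rcases haux k with rfl | rfl
        · rw [_root_.map_one]; exact one_mem _
        · rw [phi, Monoid.Coprod.lift_apply_inr, zmod2Hom_gen]
          show sigma ∈ _
          rw [sigma]
          exact Subgroup.subset_closure (Set.mem_insert_of_mem _ rfl)
      | mul x y ihx ihy =>
        rw [_root_.map_mul]
        exact mul_mem ihx ihy
    · rw [Subgroup.closure_le]
      intro x hx
      rcases hx with rfl | rfl
      · exact ⟨Monoid.Coprod.inl (Multiplicative.ofAdd (1 : ℤ)), by
          rw [phi, Monoid.Coprod.lift_apply_inl, zpowersHom_apply]; simp⟩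
      · exact ⟨Monoid.Coprod.inr (Multiplicative.ofAdd (1 : ZMod 2)), by
          rw [phi, Monoid.Coprod.lift_apply_inr, zmod2Hom_gen]; rfl⟩
  exact ⟨((MonoidHom.ofInjective hinj).trans (MulEquiv.subgroupCongr hrange)).symm⟩
end

section
/- Let G be a group and suppose there exist elements g_p ∈ G for infinitely many primes p, together with elements φ, h_p ∈ G, such that h_p = [φ, g_p], h_p commutes with both φ and g_p, h_p has order exactly p, and h_p ≠ 1. Then G admits no faithful finite-dimensional complex linear representation; moreover, any homomorphism ρ : G → GL(k, ℂ) kills each g_p with p > k. -/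
open Polynomial Module

lemma endlem {k p : ℕ} (hp : p.Prime) (hk : k < p)
    (a b c : (Module.End ℂ (Fin k → ℂ))ˣ)
    (hc : (c : Module.End ℂ (Fin k → ℂ)) = ↑a * ↑b * ↑a⁻¹ * ↑b⁻¹)
    (hcp : c ^ p = 1)
    (hca : Commute (c : Module.End ℂ (Fin k → ℂ)) ↑a)
    (hcb : Commute (c : Module.End ℂ (Fin k → ℂ)) ↑b) : c = 1 := by
  haveI : Fact p.Prime := ⟨hp⟩
  by_contra hc1
  set f : Module.End ℂ (Fin k → ℂ) := (c : Module.End ℂ (Fin k → ℂ)) with hf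
  have hfp : f ^ p = 1 := by
    rw [hf, ← Units.val_pow_eq_pow_val, hcp, Units.val_one]
  have haev : Polynomial.aeval f (X ^ p - 1 : ℂ[X]) = 0 := by
    simp [map_sub, map_pow, hfp]
  have hint : IsIntegral ℂ f :=
    ⟨X ^ p - 1, by simpa using monic_X_pow_sub_C (1 : ℂ) hp.ne_zero, haev⟩
  have hsf : Squarefree (X ^ p - 1 : ℂ[X]) :=
    (X_pow_sub_one_separable_iff.mpr (Nat.cast_ne_zero.mpr hp.ne_zero)).squarefree
  have hdvd : minpoly ℂ f ∣ X ^ p - 1 := minpoly.dvd ℂ f haev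
  have hsfmin : Squarefree (minpoly ℂ f) := hsf.squarefree_of_dvd hdvd
  have hmonic : (minpoly ℂ f).Monic := minpoly.monic hint
  have hne0 : minpoly ℂ f ≠ 0 := hmonic.ne_zero
  haveI : Nontrivial (Module.End ℂ (Fin k → ℂ)) :=
    nontrivial_of_ne f 1 (fun hh => hc1 (Units.ext hh))
  have hroot : ∃ μ : ℂ, μ ≠ 1 ∧ (minpoly ℂ f).IsRoot μ := by
    by_contra h'
    push_neg at h'
    have hsplits : (minpoly ℂ f).Splits := IsAlgClosed.splits _
    have hdeg : 0 < (minpoly ℂ f).natDegree := minpoly.natDegree_pos hint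
    have hroots : ∀ μ ∈ (minpoly ℂ f).roots, μ = 1 := by
      intro μ hμ
      by_contra hne1'
      exact h' μ hne1' ((mem_roots hne0).mp hμ)
    have hprod : minpoly ℂ f = (X - 1) ^ (minpoly ℂ f).natDegree := by
      conv_lhs => rw [hsplits.eq_prod_roots_of_monic hmonic]
      have hcard : Multiset.card (minpoly ℂ f).roots = (minpoly ℂ f).natDegree :=
        Polynomial.splits_iff_card_roots.mp hsplits
      have hrep : (minpoly ℂ f).roots = Multiset.replicate (minpoly ℂ f).natDegree 1 :=
        Multiset.eq_replicate.mpr ⟨hcard, hroots⟩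
      rw [hrep]
      simp [Multiset.map_replicate, Multiset.prod_replicate]
    have hdeg1 : (minpoly ℂ f).natDegree = 1 := by
      by_contra hne1
      have h2 : 2 ≤ (minpoly ℂ f).natDegree := by omega
      have hdv : (X - 1 : ℂ[X]) * (X - 1) ∣ minpoly ℂ f := by
        rw [hprod, ← sq]; exact pow_dvd_pow _ h2
      have hu := hsfmin _ hdv
      exact Polynomial.not_isUnit_X_sub_C (1 : ℂ) (by simpa using hu)
    have hmin : minpoly ℂ f = X - 1 := by rw [hprod, hdeg1, pow_one]
    have hz : f - 1 = 0 := by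
      have h0 := minpoly.aeval ℂ f
      rw [hmin] at h0
      simpa using h0
    exact hc1 (Units.ext (by rwa [sub_eq_zero] at hz))
  obtain ⟨μ, hμ1, hμroot⟩ := hroot
  have hμp : μ ^ p = 1 := by
    have hr : (X ^ p - 1 : ℂ[X]).IsRoot μ := hμroot.dvd hdvd
    simpa [sub_eq_zero] using hr
  have hordμ : orderOf μ = p := orderOf_eq_prime hμp hμ1
  have hev : f.HasEigenvalue μ := Module.End.hasEigenvalue_of_isRoot hμroot
  set V : Submodule ℂ (Fin k → ℂ) := f.eigenspace μ with hV
  have hVne : V ≠ ⊥ := hev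
  have hmaps : ∀ g : Module.End ℂ (Fin k → ℂ), Commute f g → Set.MapsTo g V V := by
    intro g hg x hx
    have hx' : f x = μ • x := Module.End.mem_eigenspace_iff.mp hx
    show g x ∈ f.eigenspace μ
    rw [Module.End.mem_eigenspace_iff]
    have hfg : f (g x) = g (f x) := by
      calc f (g x) = (f * g) x := rfl
        _ = (g * f) x := by rw [hg.eq]
        _ = g (f x) := rfl
    rw [hfg, hx', map_smul]
  have ma : Set.MapsTo (↑a : Module.End ℂ (Fin k → ℂ)) V V := hmaps _ hca
  have mb : Set.MapsTo (↑b : Module.End ℂ (Fin k → ℂ)) V V := hmaps _ hcb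
  have mai : Set.MapsTo (↑a⁻¹ : Module.End ℂ (Fin k → ℂ)) V V := hmaps _ hca.units_inv_right
  have mbi : Set.MapsTo (↑b⁻¹ : Module.End ℂ (Fin k → ℂ)) V V := hmaps _ hcb.units_inv_right
  have mc : Set.MapsTo f V V := hmaps f (Commute.refl f)
  set A := (↑a : Module.End ℂ (Fin k → ℂ)).restrict ma with hA
  set B := (↑b : Module.End ℂ (Fin k → ℂ)).restrict mb with hB
  set A' := (↑a⁻¹ : Module.End ℂ (Fin k → ℂ)).restrict mai with hA'
  set B' := (↑b⁻¹ : Module.End ℂ (Fin k → ℂ)).restrict mbi with hB'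
  have hAA' : A ∘ₗ A' = LinearMap.id := by
    refine LinearMap.ext fun x => Subtype.ext ?_
    have h9 : ((↑a * ↑a⁻¹ : Module.End ℂ (Fin k → ℂ))) (x : Fin k → ℂ) = (x : Fin k → ℂ) := by
      rw [Units.mul_inv]; rfl
    exact h9
  have hBB' : B ∘ₗ B' = LinearMap.id := by
    refine LinearMap.ext fun x => Subtype.ext ?_
    have h9 : ((↑b * ↑b⁻¹ : Module.End ℂ (Fin k → ℂ))) (x : Fin k → ℂ) = (x : Fin k → ℂ) := by
      rw [Units.mul_inv]; rfl
    exact h9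
  have hrc : f.restrict mc = A ∘ₗ B ∘ₗ A' ∘ₗ B' := by
    refine LinearMap.ext fun x => Subtype.ext ?_
    show f (x : Fin k → ℂ) =
        (↑a : Module.End ℂ (Fin k → ℂ))
          ((↑b : Module.End ℂ (Fin k → ℂ))
            ((↑a⁻¹ : Module.End ℂ (Fin k → ℂ))
              ((↑b⁻¹ : Module.End ℂ (Fin k → ℂ)) (x : Fin k → ℂ))))
    rw [hc]; rfl
  have hcsm : f.restrict mc = μ • (1 : Module.End ℂ V) := by
    refine LinearMap.ext fun x => Subtype.ext ?_
    have hx : f (x : Fin k → ℂ) = μ • (x : Fin k → ℂ) :=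
      Module.End.mem_eigenspace_iff.mp x.2
    change f (x : Fin k → ℂ) = _
    simpa using hx
  have hdet1 : LinearMap.det (f.restrict mc) = μ ^ Module.finrank ℂ V := by
    rw [hcsm, LinearMap.det_smul]
    simp
  have hdet2 : LinearMap.det (f.restrict mc) = 1 := by
    rw [hrc]
    rw [LinearMap.det_comp, LinearMap.det_comp, LinearMap.det_comp]
    have e1 : LinearMap.det A * LinearMap.det A' = 1 := by
      rw [← LinearMap.det_comp, hAA', LinearMap.det_id]
    have e2 : LinearMap.det B * LinearMap.det B' = 1 := by
      rw [← LinearMap.det_comp, hBB', LinearMap.det_id]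
    calc LinearMap.det A * (LinearMap.det B * (LinearMap.det A' * LinearMap.det B'))
        = (LinearMap.det A * LinearMap.det A') * (LinearMap.det B * LinearMap.det B') := by ring
      _ = 1 := by rw [e1, e2, one_mul]
  have hμn : μ ^ Module.finrank ℂ V = 1 := by rw [← hdet1, hdet2]
  have hpdvd : p ∣ Module.finrank ℂ V := hordμ ▸ orderOf_dvd_of_pow_eq_one hμn
  have hnle : Module.finrank ℂ V ≤ k := by
    simpa using (Submodule.finrank_le V)
  have hnpos : 0 < Module.finrank ℂ V := by
    haveI : Nontrivial V := Submodule.nontrivial_iff_ne_bot.mpr hVne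
    exact Module.finrank_pos
  have := Nat.le_of_dvd hnpos hpdvd
  omega

/-- If a group `G` contains, for infinitely many primes `p`, elements `φ`, `g p`
with `h p = [φ, g p]` central in `⟨φ, g p⟩`, of order exactly `p` and nontrivial,
then `G` has no faithful finite-dimensional complex linear representation; moreover
any homomorphism `ρ : G → GL(k, ℂ)` kills `h p` for every such prime `p > k`. -/
theorem stmt15 {G : Type*} [Group G] (P : Set ℕ)
    (hPprime : ∀ p ∈ P, p.Prime) (hPinf : P.Infinite)
    (φ : G) (g h : ℕ → G)
    (hcomm : ∀ p ∈ P, h p = φ * g p * φ⁻¹ * (g p)⁻¹)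
    (hcentral : ∀ p ∈ P, Commute (h p) φ ∧ Commute (h p) (g p))
    (hord : ∀ p ∈ P, orderOf (h p) = p)
    (hne : ∀ p ∈ P, h p ≠ 1) :
    (∀ k : ℕ, ∀ ρ : G →* GL (Fin k) ℂ, ¬ Function.Injective ρ) ∧
    (∀ k : ℕ, ∀ ρ : G →* GL (Fin k) ℂ, ∀ p ∈ P, k < p → ρ (h p) = 1) := by
  have key : ∀ k : ℕ, ∀ ρ : G →* GL (Fin k) ℂ, ∀ p ∈ P, k < p → ρ (h p) = 1 := by
    intro k ρ p hpP hkp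
    have hp := hPprime p hpP
    -- move to units of End via the algebra equivalence
    let e : Matrix (Fin k) (Fin k) ℂ ≃* Module.End ℂ (Fin k → ℂ) :=
      Matrix.toLinAlgEquiv'.toRingEquiv.toMulEquiv
    let ψ : GL (Fin k) ℂ ≃* (Module.End ℂ (Fin k → ℂ))ˣ := Units.mapEquiv e
    set a := ψ (ρ φ) with hadef
    set b := ψ (ρ (g p)) with hbdef
    set c := ψ (ρ (h p)) with hcdef
    have hc : (c : Module.End ℂ (Fin k → ℂ)) = ↑a * ↑b * ↑a⁻¹ * ↑b⁻¹ := by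
      rw [hadef, hbdef, hcdef, hcomm p hpP]
      simp [map_mul, map_inv]
    have hcp : c ^ p = 1 := by
      have hhp : h p ^ p = 1 := by
        have := pow_orderOf_eq_one (h p)
        rwa [hord p hpP] at this
      rw [hcdef, ← map_pow, ← map_pow, hhp, map_one, map_one]
    have hca : Commute (c : Module.End ℂ (Fin k → ℂ)) ↑a := by
      have : Commute c a := by
        rw [hcdef, hadef]
        exact ((hcentral p hpP).1.map ρ).map ψ.toMonoidHom
      exact this.map (Units.coeHom _)
    have hcb : Commute (c : Module.End ℂ (Fin k → ℂ)) ↑b := by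
      have : Commute c b := by
        rw [hcdef, hbdef]
        exact ((hcentral p hpP).2.map ρ).map ψ.toMonoidHom
      exact this.map (Units.coeHom _)
    have hc1 : c = 1 := endlem hp hkp a b c hc hcp hca hcb
    have : ψ (ρ (h p)) = ψ 1 := by rw [← hcdef, hc1, map_one]
    exact ψ.injective this
  refine ⟨?_, key⟩
  intro k ρ hinj
  obtain ⟨p, hpP, hkp⟩ := hPinf.exists_gt k
  have h1 : ρ (h p) = ρ 1 := by rw [map_one]; exact key k ρ p hpP hkp
  exact hne p hpP (hinj h1)
end
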